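/- Line splitting theorem: Let L be a complete length metric space satisfying the CBB(0) comparison, and suppose L contains a line, i.e. a map γ : ℝ → L with dist (γ s) (γ t) = |s − t| for all s, t ∈ ℝ. Then L splits off this line isometrically: there exists a subset S ⊆ L such that L is isometric to the ℓ²-product of S and ℝ (formally, there is an isometric equivalence L ≃ᵢ WithLp 2 (S × ℝ), where S carries the subspace metric). -/

import Mathlib

/-- Comparison angle (model angle for curvature `0`) at `p` between `x` and `y`. -/
noncomputable def cmpAngle {X : Type*} [MetricSpace X] (p x y : X) : ℝ :=
  Real.arccos ((dist p x ^ 2 + dist p y ^ 2 - dist x y ^ 2) / (2 * dist p x * dist p y))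

/-- The CBB(0) four-point comparison: curvature `≥ 0` in the sense of Alexandrov. -/
def CBB0Cmp (X : Type*) [MetricSpace X] : Prop :=
  ∀ p x₁ x₂ x₃ : X, p ≠ x₁ → p ≠ x₂ → p ≠ x₃ →
    cmpAngle p x₁ x₂ + cmpAngle p x₂ x₃ + cmpAngle p x₃ x₁ ≤ 2 * Real.pi

/-- The CAT(0) four-point comparison. -/
def CAT0Cmp (X : Type*) [MetricSpace X] : Prop :=
  ∀ p₁ p₂ x₁ x₂ : X, p₁ ≠ p₂ → p₁ ≠ x₁ → p₁ ≠ x₂ → p₂ ≠ x₁ → p₂ ≠ x₂ →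
    cmpAngle p₁ x₁ x₂ ≤ cmpAngle p₁ p₂ x₁ + cmpAngle p₁ p₂ x₂ ∨
    cmpAngle p₂ x₁ x₂ ≤ cmpAngle p₂ p₁ x₁ + cmpAngle p₂ p₁ x₂

/-- Midpoint characterization of the length condition (for complete spaces). -/
def LengthMid (X : Type*) [MetricSpace X] : Prop :=
  ∀ x y : X, ∀ ε : ℝ, 0 < ε → ∃ z : X,
    dist x z ≤ dist x y / 2 + ε ∧ dist z y ≤ dist x y / 2 + ε

/-- A geodesic from `p` to `q`, affinely parametrized by `[0,1]`. -/
def IsGeodesicP {X : Type*} [MetricSpace X] (γ : ℝ → X) (p q : X) : Prop :=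
  γ 0 = p ∧ γ 1 = q ∧
    ∀ s ∈ Set.Icc (0:ℝ) 1, ∀ t ∈ Set.Icc (0:ℝ) 1, dist (γ s) (γ t) = |s - t| * dist p q

/-- A metrically convex subset: together with any two points it contains
every point lying between them. -/
def MConvexSet {X : Type*} [MetricSpace X] (K : Set X) : Prop :=
  ∀ x ∈ K, ∀ y ∈ K, ∀ z : X, dist x z + dist z y = dist x y → z ∈ K

open Filter Topology

set_option linter.unusedVariables false
set_option linter.unusedSectionVars false

namespace LS

variable {L : Type*} [MetricSpace L]

/-- The cosine-ratio appearing inside `cmpAngle`. -/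
noncomputable def ratio (p x y : L) : ℝ :=
  (dist p x ^ 2 + dist p y ^ 2 - dist x y ^ 2) / (2 * dist p x * dist p y)

lemma cmpAngle_eq_arccos_ratio (p x y : L) : cmpAngle p x y = Real.arccos (ratio p x y) := rfl

lemma ratio_comm (p x y : L) : ratio p x y = ratio p y x := by
  unfold ratio
  rw [dist_comm x y, dist_comm p x, dist_comm p y]
  ring_nf

lemma cmpAngle_comm (p x y : L) : cmpAngle p x y = cmpAngle p y x := by
  rw [cmpAngle_eq_arccos_ratio, cmpAngle_eq_arccos_ratio, ratio_comm]

lemma neg_one_le_ratio {p x y : L} (hx : p ≠ x) (hy : p ≠ y) : -1 ≤ ratio p x y := by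
  have hax : (0:ℝ) < dist p x := dist_pos.mpr hx
  have hay : (0:ℝ) < dist p y := dist_pos.mpr hy
  have htri : dist x y ≤ dist x p + dist p y := dist_triangle x p y
  have h0 : (0:ℝ) ≤ dist x y := dist_nonneg
  rw [ratio, le_div_iff₀ (by positivity)]
  rw [dist_comm x p] at htri
  nlinarith

lemma ratio_le_one {p x y : L} (hx : p ≠ x) (hy : p ≠ y) : ratio p x y ≤ 1 := by
  have hax : (0:ℝ) < dist p x := dist_pos.mpr hx
  have hay : (0:ℝ) < dist p y := dist_pos.mpr hy
  have h1 : dist p x ≤ dist p y + dist y x := dist_triangle p y x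
  have h2 : dist p y ≤ dist p x + dist x y := dist_triangle p x y
  rw [ratio, div_le_one (by positivity)]
  rw [dist_comm y x] at h1
  nlinarith

lemma cos_cmpAngle {p x y : L} (hx : p ≠ x) (hy : p ≠ y) :
    Real.cos (cmpAngle p x y) = ratio p x y :=
  Real.cos_arccos (neg_one_le_ratio hx hy) (ratio_le_one hx hy)

lemma cmpAngle_nonneg (p x y : L) : 0 ≤ cmpAngle p x y := Real.arccos_nonneg _

lemma cmpAngle_le_pi (p x y : L) : cmpAngle p x y ≤ Real.pi := Real.arccos_le_pi _

/-- A line in a metric space. -/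
def IsLine (γ : ℝ → L) : Prop := ∀ s t : ℝ, dist (γ s) (γ t) = |s - t|

lemma IsLine.rev {γ : ℝ → L} (h : IsLine γ) : IsLine (fun u => γ (-u)) := by
  intro s t
  rw [h]
  rw [show -s - -t = -(s - t) by ring, abs_neg]

lemma IsLine.ne {γ : ℝ → L} (h : IsLine γ) {s t : ℝ} (hst : s ≠ t) : γ s ≠ γ t := by
  intro he
  have := h s t
  rw [he, dist_self] at this
  exact hst (by have := abs_eq_zero.mp this.symm; linarith)

/-- Busemann function of a line (limit of `dist q (γ t) - t`). -/
noncomputable def bus (γ : ℝ → L) (q : L) : ℝ := ⨅ t : ℝ, (dist q (γ t) - t)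

section Bus

variable {γ : ℝ → L} (hγ : IsLine γ)
include hγ

lemma busF_lb (q : L) (t : ℝ) : -dist q (γ 0) ≤ dist q (γ t) - t := by
  have h1 : dist (γ 0) (γ t) ≤ dist (γ 0) q + dist q (γ t) := dist_triangle _ _ _
  have h2 : dist (γ 0) (γ t) = |t| := by rw [hγ]; rw [show (0:ℝ) - t = -t by ring, abs_neg]
  have h3 : t ≤ |t| := le_abs_self t
  rw [dist_comm (γ 0) q] at h1
  linarith

lemma busF_bdd (q : L) : BddBelow (Set.range fun t : ℝ => dist q (γ t) - t) := by
  refine ⟨-dist q (γ 0), ?_⟩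
  rintro _ ⟨t, rfl⟩
  exact busF_lb hγ q t

lemma busF_antitone (q : L) : Antitone (fun t : ℝ => dist q (γ t) - t) := by
  intro s t hst
  have h1 : dist q (γ t) ≤ dist q (γ s) + dist (γ s) (γ t) := dist_triangle _ _ _
  have h2 : dist (γ s) (γ t) = t - s := by rw [hγ]; rw [abs_sub_comm, abs_of_nonneg (by linarith)]
  simp only
  linarith

lemma bus_le (q : L) (t : ℝ) : bus γ q ≤ dist q (γ t) - t :=
  ciInf_le (busF_bdd hγ q) t

lemma tendsto_bus (q : L) :
    Filter.Tendsto (fun t : ℝ => dist q (γ t) - t) Filter.atTop (nhds (bus γ q)) :=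
  tendsto_atTop_ciInf (busF_antitone hγ q) (busF_bdd hγ q)

omit hγ in
lemma le_bus {q : L} {c : ℝ} (h : ∀ t : ℝ, c ≤ dist q (γ t) - t) : c ≤ bus γ q :=
  le_ciInf h

lemma bus_sub_le (p q : L) : bus γ p - bus γ q ≤ dist p q := by
  have h : ∀ t : ℝ, bus γ p - dist p q ≤ dist q (γ t) - t := by
    intro t
    have := bus_le hγ p t
    have h2 : dist p (γ t) ≤ dist p q + dist q (γ t) := dist_triangle _ _ _
    linarith
  have := le_bus (q := q) (c := bus γ p - dist p q) h
  linarith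

lemma abs_bus_sub_le (p q : L) : |bus γ p - bus γ q| ≤ dist p q := by
  rw [abs_le]
  constructor
  · have := bus_sub_le hγ q p; rw [dist_comm] at this; linarith
  · exact bus_sub_le hγ p q

lemma bus_line_pt (u : ℝ) : bus γ (γ u) = -u := by
  refine le_antisymm ?_ ?_
  · have := bus_le hγ (γ u) u
    simpa [hγ u u] using this
  · refine le_bus (fun t => ?_)
    rw [hγ u t]
    have := le_abs_self (t - u)
    rw [abs_sub_comm]
    linarith

end Bus

section Bus2
variable {γ : ℝ → L} (hγ : IsLine γ)
include hγ

/-- If the comparison angle at `p` between `x,y` plus the angle `cmpAngle p y z = π` fit in the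
quadruple condition, ratios add up. Core concavity estimate:
`2 dist q (γ 0)² + 2 r² ≥ dist q (γ (-r))² + dist q (γ r)²`. -/
lemma concavity (hcbb : CBB0Cmp L) (q : L) {r : ℝ} (hr : 0 < r) :
    dist q (γ (-r)) ^ 2 + dist q (γ r) ^ 2 ≤ 2 * dist q (γ 0) ^ 2 + 2 * r ^ 2 := by
  by_cases hq : γ 0 = q
  · rw [← hq]
    have h1 : dist (γ 0) (γ (-r)) = r := by rw [hγ]; simp [abs_of_nonneg hr.le]
    have h2 : dist (γ 0) (γ r) = r := by
      rw [hγ]; rw [show (0:ℝ) - r = -r by ring, abs_neg, abs_of_nonneg hr.le]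
    rw [h1, h2]; nlinarith [dist_nonneg (x := γ 0) (y := γ 0)]
  · have hne1 : γ 0 ≠ γ (-r) := hγ.ne (by linarith)
    have hne2 : γ 0 ≠ γ r := hγ.ne (by linarith)
    have hq' : γ 0 ≠ q := hq
    have hsum := hcbb (γ 0) (γ (-r)) q (γ r) hne1 hq' hne2
    -- third angle is π
    have hpi : cmpAngle (γ 0) (γ r) (γ (-r)) = Real.pi := by
      rw [cmpAngle_eq_arccos_ratio]
      have h1 : dist (γ 0) (γ r) = r := by
        rw [hγ]; rw [show (0:ℝ) - r = -r by ring, abs_neg, abs_of_nonneg hr.le]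
      have h2 : dist (γ 0) (γ (-r)) = r := by rw [hγ]; simp [abs_of_nonneg hr.le]
      have h3 : dist (γ r) (γ (-r)) = 2 * r := by
        rw [hγ]; rw [show r - -r = 2*r by ring, abs_of_nonneg (by linarith)]
      have : ratio (γ 0) (γ r) (γ (-r)) = -1 := by
        rw [ratio, h1, h2, h3]
        field_simp
        ring
      rw [this, Real.arccos_neg_one]
    rw [hpi] at hsum
    have hA : cmpAngle (γ 0) (γ (-r)) q ≤ Real.pi - cmpAngle (γ 0) q (γ r) := by linarith
    have hcosA : Real.cos (cmpAngle (γ 0) (γ (-r)) q) ≥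
        Real.cos (Real.pi - cmpAngle (γ 0) q (γ r)) := by
      apply Real.cos_le_cos_of_nonneg_of_le_pi (cmpAngle_nonneg _ _ _) ?_ hA
      have := cmpAngle_nonneg (γ 0) q (γ r); linarith [Real.pi_pos]
    rw [Real.cos_pi_sub, cos_cmpAngle hne1 hq', cos_cmpAngle hq' hne2] at hcosA
    have hr1 : dist (γ 0) (γ (-r)) = r := by rw [hγ]; simp [abs_of_nonneg hr.le]
    have hr2 : dist (γ 0) (γ r) = r := by
      rw [hγ]; rw [show (0:ℝ) - r = -r by ring, abs_neg, abs_of_nonneg hr.le]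
    have hd0 : (0:ℝ) < dist (γ 0) q := dist_pos.mpr hq'
    rw [ratio, ratio, hr1, hr2] at hcosA
    rw [ge_iff_le, neg_le, ← neg_div, div_le_div_iff₀ (by positivity) (by positivity)] at hcosA
    have e1 : dist (γ (-r)) q = dist q (γ (-r)) := dist_comm _ _
    have e2 : dist q (γ r) = dist q (γ r) := rfl
    have e3 : dist (γ 0) q = dist q (γ 0) := dist_comm _ _
    rw [e1, e3] at hcosA
    have h2rd : (0:ℝ) < 2 * r * dist q (γ 0) := by
      rw [← e3]; positivity
    have hfac : 0 ≤ ((dist q (γ 0)) ^ 2 + r ^ 2 - dist q (γ (-r)) ^ 2 +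
        (dist q (γ 0) ^ 2 + r ^ 2 - dist q (γ r) ^ 2)) * (2 * r * dist q (γ 0)) := by
      nlinarith [hcosA]
    have hfin := (mul_nonneg_iff_of_pos_right h2rd).mp hfac
    linarith

/-- `bus γ + bus γ.rev = 0`. -/
lemma bus_add_busrev (hcbb : CBB0Cmp L) (q : L) :
    bus γ q + bus (fun u => γ (-u)) q = 0 := by
  have hγ' : IsLine (fun u => γ (-u)) := hγ.rev
  refine le_antisymm ?_ ?_
  · -- ≤ 0 : via concavity
    have key : ∀ r : ℝ, 1 ≤ r →
        bus γ q + bus (fun u => γ (-u)) q ≤ dist q (γ 0) ^ 2 / r := by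
      intro r hr
      have hr0 : (0:ℝ) < r := by linarith
      have hc := concavity hγ hcbb q hr0
      have h1 := bus_le hγ q r
      have h2 := bus_le hγ' q r
      set A := dist q (γ r) - r with hA
      set B := dist q (γ (-r)) - r with hB
      have hA' : dist q (γ r) = A + r := by rw [hA]; ring
      have hB' : dist q (γ (-r)) = B + r := by rw [hB]; ring
      rw [hA', hB'] at hc
      have hq1 : bus γ q ≤ A := h1
      have hq2 : bus (fun u => γ (-u)) q ≤ B := h2
      have hAB : A + B ≤ dist q (γ 0) ^ 2 / r := by
        rw [le_div_iff₀ hr0]; nlinarith [sq_nonneg A, sq_nonneg B]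
      linarith
    have htend : Filter.Tendsto (fun r : ℝ => dist q (γ 0) ^ 2 / r)
        Filter.atTop (nhds 0) := tendsto_const_nhds.div_atTop tendsto_id
    refine ge_of_tendsto htend ?_
    filter_upwards [Filter.eventually_ge_atTop (1:ℝ)] with r hr using key r hr
  · -- ≥ 0 : triangle inequality
    have h : ∀ r : ℝ, 0 ≤ (dist q (γ r) - r) + (dist q (γ (-r)) - r) := by
      intro r
      have h1 : dist (γ r) (γ (-r)) ≤ dist (γ r) q + dist q (γ (-r)) := dist_triangle _ _ _
      have h2 : dist (γ r) (γ (-r)) = |2 * r| := by rw [hγ]; ring_nf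
      have h3 : 2 * r ≤ |2 * r| := le_abs_self _
      rw [dist_comm (γ r) q] at h1
      linarith
    have htend : Filter.Tendsto
        (fun r : ℝ => (dist q (γ r) - r) + (dist q (γ (-r)) - r))
        Filter.atTop (nhds (bus γ q + bus (fun u => γ (-u)) q)) :=
      (tendsto_bus hγ q).add (tendsto_bus hγ' q)
    exact ge_of_tendsto htend (Filter.Eventually.of_forall h)

end Bus2

section QuadLim
variable {γ : ℝ → L} (hγ : IsLine γ)
include hγ

lemma dist_line_atTop (u : L) :
    Filter.Tendsto (fun R : ℝ => dist u (γ R)) Filter.atTop Filter.atTop := by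
  apply Filter.tendsto_atTop_mono (f := fun R : ℝ => R - dist u (γ 0))
  · intro R
    have h1 : dist (γ 0) (γ R) ≤ dist (γ 0) u + dist u (γ R) := dist_triangle _ _ _
    have h2 : dist (γ 0) (γ R) = |R| := by rw [hγ]; rw [show (0:ℝ) - R = -R by ring, abs_neg]
    have h3 : R ≤ |R| := le_abs_self R
    rw [dist_comm (γ 0) u] at h1
    linarith
  · exact Filter.tendsto_atTop_add_const_right _ _ Filter.tendsto_id

lemma eventually_ne_line (u : L) : ∀ᶠ R : ℝ in Filter.atTop, u ≠ γ R := by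
  have h := (dist_line_atTop hγ u).eventually_ge_atTop 1
  filter_upwards [h] with R hR
  intro he
  rw [← he, dist_self] at hR
  linarith

/-- The comparison ratio at `u` between a fixed point `v` and points escaping to infinity
along the line tends to `(bus γ u - bus γ v) / dist u v`. -/
lemma ratio_tendsto (u v : L) (huv : u ≠ v) :
    Filter.Tendsto (fun R : ℝ => ratio u v (γ R)) Filter.atTop
      (nhds ((bus γ u - bus γ v) / dist u v)) := by
  have hd : (0:ℝ) < dist u v := dist_pos.mpr huv
  set α : ℝ → ℝ := fun R => dist u (γ R) - R with hα
  set β : ℝ → ℝ := fun R => dist v (γ R) - R with hβ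
  have hαt : Filter.Tendsto α Filter.atTop (nhds (bus γ u)) := tendsto_bus hγ u
  have hβt : Filter.Tendsto β Filter.atTop (nhds (bus γ v)) := tendsto_bus hγ v
  have hinv : Filter.Tendsto (fun R : ℝ => (dist u (γ R))⁻¹) Filter.atTop (nhds 0) :=
    (dist_line_atTop hγ u).inv_tendsto_atTop
  -- pointwise identity (whenever dist u (γ R) ≠ 0)
  have hident : ∀ᶠ R : ℝ in Filter.atTop,
      ratio u v (γ R) =
        dist u v / 2 * (dist u (γ R))⁻¹ +
        ((α R - β R) / dist u v) * (1 + (β R - α R) / 2 * (dist u (γ R))⁻¹) := by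
    filter_upwards [(dist_line_atTop hγ u).eventually_ge_atTop 1] with R hR
    have hne : dist u (γ R) ≠ 0 := by linarith
    have hexp : dist v (γ R) = dist u (γ R) + (β R - α R) := by simp [hα, hβ]
    rw [ratio, hexp]
    field_simp
    ring
  rw [Filter.tendsto_congr' hident]
  have hlim : Filter.Tendsto (fun R : ℝ =>
      dist u v / 2 * (dist u (γ R))⁻¹ +
        ((α R - β R) / dist u v) * (1 + (β R - α R) / 2 * (dist u (γ R))⁻¹))
      Filter.atTop (nhds (dist u v / 2 * 0 +
        ((bus γ u - bus γ v) / dist u v) * (1 + (bus γ v - bus γ u) / 2 * 0))) := by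
    exact ((tendsto_const_nhds.mul hinv).add
      (((hαt.sub hβt).div_const _).mul
        (tendsto_const_nhds.add (((hβt.sub hαt).div_const _).mul hinv))))
  simpa using hlim

lemma angle_tendsto (u v : L) (huv : u ≠ v) :
    Filter.Tendsto (fun R : ℝ => cmpAngle u v (γ R)) Filter.atTop
      (nhds (Real.arccos ((bus γ u - bus γ v) / dist u v))) := by
  have := (Real.continuous_arccos.tendsto _).comp (ratio_tendsto hγ u v huv)
  simpa [Function.comp_def, cmpAngle_eq_arccos_ratio] using this

/-- Comparison of the angle at `u` between `v, w` with the Busemann angles. -/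
lemma quad_lim (hcbb : CBB0Cmp L) (u v w : L) (hv : u ≠ v) (hw : u ≠ w) :
    cmpAngle u v w ≤ 2 * Real.pi
      - Real.arccos ((bus γ u - bus γ v) / dist u v)
      - Real.arccos ((bus γ u - bus γ w) / dist u w) := by
  have hev : ∀ᶠ R : ℝ in Filter.atTop,
      cmpAngle u v w ≤ 2 * Real.pi - cmpAngle u v (γ R) - cmpAngle u w (γ R) := by
    filter_upwards [eventually_ne_line hγ u] with R hR
    have h := hcbb u v w (γ R) hv hw hR
    have h1 : cmpAngle u w (γ R) = cmpAngle u (γ R) w := cmpAngle_comm u w (γ R)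
    -- hcbb u v w (γ R) : ∠(v,w) + ∠(w,γR) + ∠(γR,v) ≤ 2π
    have h2 : cmpAngle u (γ R) v = cmpAngle u v (γ R) := cmpAngle_comm u (γ R) v
    linarith
  have hlim : Filter.Tendsto (fun R : ℝ =>
      2 * Real.pi - cmpAngle u v (γ R) - cmpAngle u w (γ R)) Filter.atTop
      (nhds (2 * Real.pi - Real.arccos ((bus γ u - bus γ v) / dist u v)
        - Real.arccos ((bus γ u - bus γ w) / dist u w))) :=
    (tendsto_const_nhds.sub (angle_tendsto hγ u v hv)).sub (angle_tendsto hγ u w hw)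
  exact ge_of_tendsto hlim hev

/-- The key comparison: if `w` lies "in front of" `c` with respect to the Busemann function
(`bus δ w - bus δ c = dist c w`), then distances to any point `p` satisfy the Euclidean
comparison inequality. -/
lemma key (hcbb : CBB0Cmp L) (c w p : L) (hm : 0 < dist c w)
    (hfront : bus γ w - bus γ c = dist c w) :
    dist p w ^ 2 ≤ dist p c ^ 2 + dist c w ^ 2 + 2 * dist c w * (bus γ c - bus γ p) := by
  by_cases hpc : p = c
  · subst hpc
    simp
  by_cases hpw : p = w
  · subst hpw
    have hlip := abs_bus_sub_le hγ c p
    rw [abs_le] at hlip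
    rw [dist_comm c p] at hlip
    simp only [dist_self]
    nlinarith [hlip.1, hlip.2]
  have hcp : c ≠ p := fun h => hpc h.symm
  have hcw : c ≠ w := by
    intro h; rw [h, dist_self] at hm; exact lt_irrefl _ hm
  have hX : (0:ℝ) < dist c p := dist_pos.mpr hcp
  have hq := quad_lim hγ hcbb c p w hcp hcw
  -- the angle to w at infinity is π
  have hw1 : (bus γ c - bus γ w) / dist c w = -1 := by
    rw [show bus γ c - bus γ w = -(dist c w) by linarith]
    field_simp
  rw [hw1, Real.arccos_neg_one] at hq
  set V : ℝ := (bus γ c - bus γ p) / dist c p with hV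
  have hVb : -1 ≤ V ∧ V ≤ 1 := by
    have hlip := abs_bus_sub_le hγ c p
    rw [abs_le] at hlip
    constructor
    · rw [hV, le_div_iff₀ hX]; linarith [hlip.1]
    · rw [hV, div_le_one hX]; linarith [hlip.2]
  have harc : cmpAngle c p w ≤ Real.arccos (-V) := by
    rw [Real.arccos_neg]
    linarith
  have hcos : ratio c p w ≥ -V := by
    have h1 : Real.cos (cmpAngle c p w) ≥ Real.cos (Real.arccos (-V)) := by
      apply Real.cos_le_cos_of_nonneg_of_le_pi (cmpAngle_nonneg _ _ _)
        (Real.arccos_le_pi _) harc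
    rw [Real.cos_arccos (by linarith [hVb.2]) (by linarith [hVb.1])] at h1
    rw [cos_cmpAngle hcp hcw] at h1
    exact h1
  rw [ratio, ge_iff_le, hV, ← neg_div, div_le_div_iff₀ hX (by positivity)] at hcos
  have hdpc : dist p c = dist c p := dist_comm p c
  have hfac : 0 ≤ (dist c p ^ 2 + dist c w ^ 2 - dist p w ^ 2 +
      2 * dist c w * (bus γ c - bus γ p)) * dist c p := by nlinarith [hcos]
  have hfin := (mul_nonneg_iff_of_pos_right hX).mp hfac
  rw [dist_comm p c]
  linarith

end QuadLim

lemma approx_between_aux (hlen : LengthMid L) :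
    ∀ n : ℕ, ∀ η : ℝ, 0 < η → ∀ x y : L, dist x y < 2 ^ n * η →
      ∀ t : ℝ, 0 ≤ t → t ≤ dist x y →
        ∃ z : L, dist x z ≤ t + 2 * η ∧ dist z y ≤ dist x y - t + 2 * η := by
  intro n
  induction n with
  | zero =>
    intro η hη x y hD t ht hty
    have h1 : dist x x = 0 := dist_self x
    have h2 : (2:ℝ) ^ 0 = 1 := by norm_num
    rw [h2, one_mul] at hD
    exact ⟨x, by rw [h1]; linarith, by linarith⟩
  | succ n ih =>
    intro η hη x y hD t ht hty
    set D := dist x y with hDdef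
    have hDn : D / 2 < 2 ^ n * η := by
      rw [pow_succ] at hD; linarith
    -- choose the midpoint accuracy δ
    set δ : ℝ := min (η / 2) ((2 ^ n * η - D / 2) / (2 ^ n + 2)) with hδdef
    have h2n : (0:ℝ) < 2 ^ n := by positivity
    have hδpos : 0 < δ := by
      apply lt_min (by linarith)
      apply div_pos (by linarith) (by linarith)
    have hδη : δ ≤ η / 2 := min_le_left _ _
    have hδkey : δ * (2 ^ n + 1) < 2 ^ n * η - D / 2 := by
      have h1 : δ ≤ (2 ^ n * η - D / 2) / (2 ^ n + 2) := min_le_right _ _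
      have h2 : (0:ℝ) < 2 ^ n + 2 := by linarith
      calc δ * (2 ^ n + 1) ≤ ((2 ^ n * η - D / 2) / (2 ^ n + 2)) * (2 ^ n + 1) := by
            apply mul_le_mul_of_nonneg_right h1 (by linarith)
        _ < 2 ^ n * η - D / 2 := by
            rw [div_mul_eq_mul_div, div_lt_iff₀ h2]
            have : (0:ℝ) < 2 ^ n * η - D / 2 := by linarith
            nlinarith
    obtain ⟨m, hm1, hm2⟩ := hlen x y δ hδpos
    have hδ' : 0 < η - δ := by linarith
    by_cases hcase : t ≤ dist x m
    · -- recurse on (x, m)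
      have hxm : dist x m < 2 ^ n * (η - δ) := by
        have : dist x m ≤ D / 2 + δ := hm1
        have h3 : δ * (2 ^ n + 1) < 2 ^ n * η - D / 2 := hδkey
        nlinarith
      obtain ⟨z, hz1, hz2⟩ := ih (η - δ) hδ' x m hxm t ht hcase
      refine ⟨z, by linarith, ?_⟩
      have htri : dist z y ≤ dist z m + dist m y := dist_triangle _ _ _
      have : dist x m ≤ D / 2 + δ := hm1
      have : dist m y ≤ D / 2 + δ := hm2
      linarith
    · -- recurse on (m, y) with t' = t - dist x m
      push_neg at hcase
      have hxm : dist m y < 2 ^ n * (η - δ) := by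
        have : dist m y ≤ D / 2 + δ := hm2
        nlinarith [hδkey]
      have ht' : 0 ≤ t - dist x m := by linarith
      have hty' : t - dist x m ≤ dist m y := by
        have htri : D ≤ dist x m + dist m y := dist_triangle x m y
        linarith
      obtain ⟨z, hz1, hz2⟩ := ih (η - δ) hδ' m y hxm (t - dist x m) ht' hty'
      refine ⟨z, ?_, by linarith⟩
      have htri : dist x z ≤ dist x m + dist m z := dist_triangle _ _ _
      linarith

lemma approx_between (hlen : LengthMid L) {η : ℝ} (hη : 0 < η) (x y : L) {t : ℝ}
    (ht : 0 ≤ t) (hty : t ≤ dist x y) :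
    ∃ z : L, dist x z ≤ t + η ∧ dist z y ≤ dist x y - t + η := by
  obtain ⟨n, hn⟩ := pow_unbounded_of_one_lt (dist x y / (η / 4)) (by norm_num : (1:ℝ) < 2)
  have h4 : (0:ℝ) < η / 4 := by linarith
  have hD : dist x y < 2 ^ n * (η / 4) := by
    rw [div_lt_iff₀ h4] at hn; linarith
  obtain ⟨z, hz1, hz2⟩ := approx_between_aux hlen n (η / 4) h4 x y hD t ht hty
  exact ⟨z, by linarith, by linarith⟩


lemma arccos_anti {x y : ℝ} (hxy : x ≤ y) : Real.arccos y ≤ Real.arccos x := by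
  have := Real.monotone_arcsin hxy
  rw [Real.arccos_eq_pi_div_two_sub_arcsin, Real.arccos_eq_pi_div_two_sub_arcsin]
  linarith

lemma adm_arith {t ηE ε c c' d δ : ℝ} (ht : 0 < t) (hε : 0 < ε)
    (hηE0 : 0 < ηE) (h4 : ηE ≤ t / 4) (hεb : ηE ≤ ε ^ 2 / (40 * t)) (hδ : δ = 3 * ηE / t)
    (hc1 : t - ηE ≤ c) (hc2 : c ≤ t + ηE) (hc1' : t - ηE ≤ c') (hc2' : c' ≤ t + ηE)
    (hd0 : 0 ≤ d) (hsq : d ^ 2 ≤ (c - c') ^ 2 + 8 * (c * c') * δ) : d ≤ ε := by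
  have hδt : δ * t = 3 * ηE := by rw [hδ]; field_simp
  have hδ0 : 0 ≤ δ := by rw [hδ]; positivity
  have htE : t * ηE ≤ ε ^ 2 / 40 := by
    rw [le_div_iff₀ (by positivity : (0:ℝ) < 40 * t)] at hεb
    nlinarith
  have h1 : (c - c') ^ 2 ≤ 4 * ηE ^ 2 := by nlinarith
  have h2 : c * c' ≤ (t + ηE) ^ 2 := by nlinarith
  have h3 : 8 * (c * c') * δ ≤ 8 * (t + ηE) ^ 2 * δ :=
    mul_le_mul_of_nonneg_right (by linarith) hδ0
  have h9 : (t + ηE) ^ 2 ≤ (5 / 4 * t) ^ 2 := by nlinarith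
  have h10 : 8 * (t + ηE) ^ 2 * δ ≤ 8 * (5 / 4 * t) ^ 2 * δ :=
    mul_le_mul_of_nonneg_right (by linarith) hδ0
  have h11 : 8 * (5 / 4 * t) ^ 2 * δ = 25 / 2 * t * (δ * t) := by ring
  rw [h11, hδt] at h10
  have h12 : 4 * ηE ^ 2 ≤ t * ηE := by nlinarith
  have hd2 : d ^ 2 ≤ ε ^ 2 := by nlinarith
  nlinarith

lemma ratio_to_sq {c c' d δ : ℝ} (h : (1 - 4 * δ) * (2 * c * c') ≤ c ^ 2 + c' ^ 2 - d ^ 2) :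
    d ^ 2 ≤ (c - c') ^ 2 + 8 * (c * c') * δ := by nlinarith



section Ray
variable {γ : ℝ → L} (hγ : IsLine γ)
include hγ

/-- lower bound for the reversed Busemann function of an "approximately between" point. -/
lemma busrev_lb {q z : L} {T : ℝ} (hT : 0 ≤ T) :
    T - dist z (γ T) ≤ bus (fun u => γ (-u)) z := by
  refine le_bus (fun R => ?_)
  have h1 : dist (γ T) (γ (-R)) ≤ dist (γ T) z + dist z (γ (-R)) := dist_triangle _ _ _
  have h2 : dist (γ T) (γ (-R)) = |T + R| := by rw [hγ]; ring_nf
  have h3 : T + R ≤ |T + R| := le_abs_self _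
  rw [dist_comm (γ T) z] at h1
  show T - dist z (γ T) ≤ dist z (γ (-R)) - R
  linarith

/-- Two approximately-between points at parameter `t` on long segments to the line are close. -/
lemma adm_close (hcbb : CBB0Cmp L) (q : L) {t : ℝ} (ht : 0 < t) {ε : ℝ} (hε : 0 < ε) :
    ∃ ηE : ℝ, 0 < ηE ∧ ηE ≤ t / 4 ∧ ∀ T T' η η' (z z' : L), 0 ≤ T → 0 ≤ T' →
      0 < η → η ≤ ηE → 0 < η' → η' ≤ ηE →
      dist q (γ T) - T - bus γ q ≤ ηE → dist q (γ T') - T' - bus γ q ≤ ηE →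
      dist q z ≤ t + η → dist z (γ T) ≤ dist q (γ T) - t + η →
      dist q z' ≤ t + η' → dist z' (γ T') ≤ dist q (γ T') - t + η' →
      dist z z' ≤ ε := by
  have hηE0 : 0 < min (t / 4) (ε ^ 2 / (40 * t)) := by positivity
  refine ⟨min (t / 4) (ε ^ 2 / (40 * t)), hηE0, min_le_left _ _, ?_⟩
  set ηE : ℝ := min (t / 4) (ε ^ 2 / (40 * t)) with hηEdef
  clear_value ηE
  have hηE4 : ηE ≤ t / 4 := by rw [hηEdef]; exact min_le_left _ _
  have hηEε : ηE ≤ ε ^ 2 / (40 * t) := by rw [hηEdef]; exact min_le_right _ _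
  clear hηEdef
  intro T T' η η' z z' hT hT' hη hηE hη' hηE' heT heT' hqz hzT hqz' hzT'
  have hbb := bus_add_busrev hγ hcbb q
  set δ : ℝ := 3 * ηE / t with hδdef
  have hδ0 : 0 < δ := by positivity
  have hδt : δ * t = 3 * ηE := by rw [hδdef]; field_simp
  have hδ1 : δ ≤ 3 / 4 := by rw [hδdef, div_le_iff₀ ht]; linarith
  -- generic bound for one admissible point
  have hVbound : ∀ (w : L) (Tw ηw : ℝ), 0 ≤ Tw → 0 < ηw → ηw ≤ ηE →
      dist q (γ Tw) - Tw - bus γ q ≤ ηE →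
      dist q w ≤ t + ηw → dist w (γ Tw) ≤ dist q (γ Tw) - t + ηw →
      (bus (fun u => γ (-u)) q - bus (fun u => γ (-u)) w) / dist q w ≤ -1 + δ := by
    intro w Tw ηw hTw hηw hηwE heTw hqw hwT
    have hlb : t - ηw ≤ dist q w := by
      have h1 : dist q (γ Tw) ≤ dist q w + dist w (γ Tw) := dist_triangle _ _ _
      linarith
    have hdw : 0 < dist q w := by linarith
    have hbusw : t - ηw - (bus γ q + (dist q (γ Tw) - Tw - bus γ q)) ≤
        bus (fun u => γ (-u)) w := by
      have h2 := busrev_lb hγ (q := q) (z := w) (T := Tw) hTw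
      linarith
    have hnum : bus (fun u => γ (-u)) q - bus (fun u => γ (-u)) w ≤ 2 * ηE - t := by
      linarith
    rw [div_le_iff₀ hdw]
    have hexp : (-1 + δ) * (t + ηE) = -t - ηE + δ * t + δ * ηE := by ring
    have hch2 : 2 * ηE - t ≤ (-1 + δ) * (t + ηE) := by
      rw [hexp, hδt]
      have := mul_nonneg hδ0.le (by positivity : (0:ℝ) ≤ ηE)
      linarith
    have hch3 : (-1 + δ) * (t + ηE) ≤ (-1 + δ) * dist q w := by
      apply mul_le_mul_of_nonpos_left ?_ (by linarith)
      linarith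
    linarith
  have hc_lb : t - η ≤ dist q z := by
    have h1 : dist q (γ T) ≤ dist q z + dist z (γ T) := dist_triangle _ _ _
    linarith
  have hc_lb' : t - η' ≤ dist q z' := by
    have h1 : dist q (γ T') ≤ dist q z' + dist z' (γ T') := dist_triangle _ _ _
    linarith
  have hqzne : q ≠ z := by rw [← dist_pos]; linarith
  have hqz'ne : q ≠ z' := by rw [← dist_pos]; linarith
  have hVz := hVbound z T η hT hη hηE heT hqz hzT
  have hVz' := hVbound z' T' η' hT' hη' hηE' heT' hqz' hzT'
  have hquad := quad_lim hγ.rev hcbb q z z' hqzne hqz'ne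
  have harc1 : Real.arccos (-1 + δ) ≤
      Real.arccos ((bus (fun u => γ (-u)) q - bus (fun u => γ (-u)) z) / dist q z) :=
    arccos_anti hVz
  have harc2 : Real.arccos (-1 + δ) ≤
      Real.arccos ((bus (fun u => γ (-u)) q - bus (fun u => γ (-u)) z') / dist q z') :=
    arccos_anti hVz'
  have hB : cmpAngle q z z' ≤ 2 * Real.arccos (1 - δ) := by
    have hneg : Real.arccos (-1 + δ) = Real.pi - Real.arccos (1 - δ) := by
      rw [show (-1 + δ : ℝ) = -(1 - δ) by ring, Real.arccos_neg]
    rw [hneg] at harc1 harc2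
    linarith
  have h1δ : (0:ℝ) ≤ 1 - δ := by linarith
  have hBpi : 2 * Real.arccos (1 - δ) ≤ Real.pi := by
    have := Real.arccos_le_pi_div_two.mpr h1δ
    linarith
  have hcos : Real.cos (2 * Real.arccos (1 - δ)) ≤ ratio q z z' := by
    have h1 : Real.cos (2 * Real.arccos (1 - δ)) ≤ Real.cos (cmpAngle q z z') :=
      Real.cos_le_cos_of_nonneg_of_le_pi (cmpAngle_nonneg _ _ _) hBpi hB
    rw [cos_cmpAngle hqzne hqz'ne] at h1
    exact h1
  have hcosval : Real.cos (2 * Real.arccos (1 - δ)) = 2 * (1 - δ) ^ 2 - 1 := by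
    rw [Real.cos_two_mul, Real.cos_arccos (by linarith) (by linarith)]
  rw [hcosval] at hcos
  have hratio : 1 - 4 * δ ≤ ratio q z z' := by nlinarith [hcos, sq_nonneg δ]
  have hdz : 0 < dist q z := by linarith
  have hdz' : 0 < dist q z' := by linarith
  rw [ratio, le_div_iff₀ (by positivity)] at hratio
  have hsq : dist z z' ^ 2 ≤
      (dist q z - dist q z') ^ 2 + 8 * (dist q z * dist q z') * δ :=
    ratio_to_sq (by linarith [hratio])
  exact adm_arith (c := dist q z) (c' := dist q z') ht hε
    (by positivity) hηE4 hηEε hδdef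
    (by linarith) (by linarith) (by linarith) (by linarith) dist_nonneg hsq

/-- `x` is the point at distance `t` from `q` along the ray towards `γ(+∞)`. -/
def IsRayPoint (γ : ℝ → L) (q x : L) (t : ℝ) : Prop :=
  dist q x = t ∧ bus γ x = bus γ q - t ∧
  ∀ ε : ℝ, 0 < ε → ∃ ηE : ℝ, 0 < ηE ∧ ∀ T η (z : L), 0 ≤ T → 0 < η → η ≤ ηE →
    dist q (γ T) - T - bus γ q ≤ ηE →
    dist q z ≤ t + η → dist z (γ T) ≤ dist q (γ T) - t + η → dist x z ≤ ε

/-- good parameters exist on the line. -/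
lemma good_T (q : L) {c : ℝ} (hc : 0 < c) (t : ℝ) :
    ∃ T : ℝ, 0 ≤ T ∧ dist q (γ T) - T - bus γ q ≤ c ∧ t ≤ dist q (γ T) := by
  have h1 : bus γ q < bus γ q + c := by linarith
  have h2 : ⨅ s : ℝ, (dist q (γ s) - s) < bus γ q + c := h1
  obtain ⟨T₀, hT₀⟩ := exists_lt_of_ciInf_lt h2
  refine ⟨max T₀ (max 0 (t + dist q (γ 0))), le_trans (le_max_left _ _) (le_max_right _ _), ?_, ?_⟩
  · have hmono := busF_antitone hγ q (le_max_left T₀ (max 0 (t + dist q (γ 0))))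
    simp only at hmono
    linarith [hT₀, hmono]
  · set T := max T₀ (max 0 (t + dist q (γ 0))) with hTdef
    have hTt : t + dist q (γ 0) ≤ T := le_trans (le_max_right _ _) (le_max_right _ _)
    have h3 : dist (γ 0) (γ T) ≤ dist (γ 0) q + dist q (γ T) := dist_triangle _ _ _
    have h4 : dist (γ 0) (γ T) = |T| := by rw [hγ]; rw [show (0:ℝ) - T = -T by ring, abs_neg]
    have h5 : T ≤ |T| := le_abs_self T
    rw [dist_comm (γ 0) q] at h3
    linarith

lemma ray_exists [CompleteSpace L] (hlen : LengthMid L) (hcbb : CBB0Cmp L) (q : L)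
    {t : ℝ} (ht : 0 < t) : ∃ x : L, IsRayPoint γ q x t := by
  -- choose parameters and approximate points
  have hex : ∀ n : ℕ, ∃ T : ℝ, 0 ≤ T ∧
      dist q (γ T) - T - bus γ q ≤ 1 / (n + 1) ∧ t ≤ dist q (γ T) :=
    fun n => good_T hγ q (by positivity) t
  choose T hT0 hTe hTt using hex
  have hz : ∀ n : ℕ, ∃ z : L, dist q z ≤ t + 1 / (n + 1) ∧
      dist z (γ (T n)) ≤ dist q (γ (T n)) - t + 1 / (n + 1) :=
    fun n => approx_between hlen (by positivity) q (γ (T n)) ht.le (hTt n)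
  choose z hz1 hz2 using hz
  have hn1 : ∀ n : ℕ, (0:ℝ) < 1 / (n + 1) := fun n => by positivity
  -- Cauchy
  have hcauchy : CauchySeq z := by
    rw [Metric.cauchySeq_iff]
    intro ε hε
    obtain ⟨ηE, hηE0, -, hcl⟩ := adm_close hγ hcbb q ht (half_pos hε)
    obtain ⟨N, hN⟩ := exists_nat_one_div_lt hηE0
    refine ⟨N, fun m hm n hn => ?_⟩
    have hm1 : (1:ℝ) / (m + 1) ≤ ηE := by
      have : (1:ℝ) / (m + 1) ≤ 1 / (N + 1) := by
        apply one_div_le_one_div_of_le (by positivity)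
        exact_mod_cast by omega
      linarith [hN]
    have hn1' : (1:ℝ) / (n + 1) ≤ ηE := by
      have : (1:ℝ) / (n + 1) ≤ 1 / (N + 1) := by
        apply one_div_le_one_div_of_le (by positivity)
        exact_mod_cast by omega
      linarith [hN]
    have := hcl (T m) (T n) (1 / (m + 1)) (1 / (n + 1)) (z m) (z n)
      (hT0 m) (hT0 n) (hn1 m) hm1 (hn1 n) hn1'
      (le_trans (hTe m) hm1) (le_trans (hTe n) hn1')
      (hz1 m) (hz2 m) (hz1 n) (hz2 n)
    linarith [half_lt_self hε]
  obtain ⟨x, hx⟩ := cauchySeq_tendsto_of_complete hcauchy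
  have hdzx : Filter.Tendsto (fun n => dist x (z n)) Filter.atTop (nhds 0) := by
    have h := (tendsto_const_nhds (x := x)).dist hx
    simpa using h
  have hton : Filter.Tendsto (fun n : ℕ => 1 / ((n:ℝ) + 1)) Filter.atTop (nhds 0) :=
    tendsto_one_div_add_atTop_nhds_zero_nat
  refine ⟨x, ?_, ?_, ?_⟩
  · -- dist q x = t
    have h2 : Filter.Tendsto (fun n => dist q (z n)) Filter.atTop (nhds (dist q x)) :=
      (tendsto_const_nhds (x := q)).dist hx
    have huplim : Filter.Tendsto (fun n : ℕ => t + 1 / ((n:ℝ) + 1)) Filter.atTop (nhds t) := by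
      simpa using (tendsto_const_nhds (x := t)).add hton
    have hlolim : Filter.Tendsto (fun n : ℕ => t - 1 / ((n:ℝ) + 1)) Filter.atTop (nhds t) := by
      simpa using (tendsto_const_nhds (x := t)).sub hton
    have hup : dist q x ≤ t :=
      le_of_tendsto_of_tendsto' h2 huplim (fun n => hz1 n)
    have hlo : t ≤ dist q x := by
      refine le_of_tendsto_of_tendsto' hlolim h2 (fun n => ?_)
      have h3 : dist q (γ (T n)) ≤ dist q (z n) + dist (z n) (γ (T n)) := dist_triangle _ _ _
      have := hz2 n
      linarith
    linarith
  · -- bus γ x = bus γ q - t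
    have habs : ∀ n : ℕ, |bus γ x - (bus γ q - t)| ≤ dist x (z n) + 2 * (1 / (n + 1)) := by
      intro n
      have hbzn_ub : bus γ (z n) ≤ bus γ q - t + 2 * (1 / (n + 1)) := by
        have h4 := bus_le hγ (z n) (T n)
        have h5 := hz2 n
        have h6 := hTe n
        linarith
      have hbzn_lb : bus γ q - t - 1 / (n + 1) ≤ bus γ (z n) := by
        have h4 := abs_bus_sub_le hγ q (z n)
        rw [abs_le] at h4
        have := hz1 n
        linarith [h4.2]
      have h7 : |bus γ x - bus γ (z n)| ≤ dist x (z n) := abs_bus_sub_le hγ x (z n)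
      have h8 : |bus γ (z n) - (bus γ q - t)| ≤ 2 * (1 / (n + 1)) := by
        rw [abs_le]
        constructor <;> [skip; linarith]
        have h9 : (0:ℝ) < 1 / (n + 1) := hn1 n
        linarith
      calc |bus γ x - (bus γ q - t)| ≤
          |bus γ x - bus γ (z n)| + |bus γ (z n) - (bus γ q - t)| := abs_sub_le _ _ _
        _ ≤ dist x (z n) + 2 * (1 / (n + 1)) := by linarith
    have hlim0 : Filter.Tendsto (fun n : ℕ => dist x (z n) + 2 * (1 / ((n:ℝ) + 1)))
        Filter.atTop (nhds 0) := by
      have := hdzx.add (hton.const_mul 2)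
      simpa [mul_comm] using this
    have habs0 : |bus γ x - (bus γ q - t)| ≤ 0 :=
      ge_of_tendsto hlim0 (Filter.Eventually.of_forall habs)
    have := abs_nonneg (bus γ x - (bus γ q - t))
    have heq : |bus γ x - (bus γ q - t)| = 0 := le_antisymm habs0 this
    rw [abs_eq_zero] at heq
    linarith
  · -- closeness to admissible points
    intro ε hε
    obtain ⟨ηE, hηE0, -, hcl⟩ := adm_close hγ hcbb q ht (half_pos hε)
    have hev1 : ∀ᶠ n : ℕ in Filter.atTop, dist x (z n) ≤ ε / 2 := by
      have := hdzx.eventually_le_const (half_pos hε)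
      simpa using this
    have hev2 : ∀ᶠ n : ℕ in Filter.atTop, 1 / ((n:ℝ) + 1) ≤ ηE := by
      have := hton.eventually_le_const hηE0
      simpa using this
    obtain ⟨n, hdn, hηn⟩ := (hev1.and hev2).exists
    refine ⟨ηE, hηE0, fun Tw ηw w hTw hηw hηwE heTw hqw hwT => ?_⟩
    have hzn := hcl (T n) Tw (1 / (n + 1)) ηw (z n) w (hT0 n) hTw (hn1 n) hηn hηw hηwE
      (le_trans (hTe n) hηn) heTw (hz1 n) (hz2 n) hqw hwT
    calc dist x w ≤ dist x (z n) + dist (z n) w := dist_triangle _ _ _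
      _ ≤ ε / 2 + ε / 2 := by linarith
      _ = ε := by ring

/-- distance between consecutive ray points. -/
lemma ray_dist (hlen : LengthMid L) (hcbb : CBB0Cmp L) (q : L) {s t : ℝ} {x y : L}
    (hs : 0 < s) (hst : s ≤ t) (hx : IsRayPoint γ q x s) (hy : IsRayPoint γ q y t) :
    dist x y ≤ t - s := by
  obtain ⟨hxd, hxb, hxcl⟩ := hx
  obtain ⟨hyd, hyb, hycl⟩ := hy
  refine le_of_forall_pos_le_add (fun ε hε => ?_)
  obtain ⟨ηx, hηx0, hclx⟩ := hxcl (ε / 4) (by linarith)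
  obtain ⟨ηy, hηy0, hcly⟩ := hycl (ε / 4) (by linarith)
  obtain ⟨T, hT0, hTe, hTt⟩ := good_T hγ q (lt_min hηx0 hηy0) t
  have hTex : dist q (γ T) - T - bus γ q ≤ ηx := le_trans hTe (min_le_left _ _)
  have hTey : dist q (γ T) - T - bus γ q ≤ ηy := le_trans hTe (min_le_right _ _)
  set η : ℝ := min (ηx / 4) (min ηy (ε / 4)) with hηdef
  have hη0 : 0 < η := lt_min (by linarith) (lt_min hηy0 (by linarith))
  have hηx4 : η ≤ ηx / 4 := min_le_left _ _
  have hηy' : η ≤ ηy := le_trans (min_le_right _ _) (min_le_left _ _)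
  have hηε : η ≤ ε / 4 := le_trans (min_le_right _ _) (min_le_right _ _)
  obtain ⟨zt, hzt1, hzt2⟩ := approx_between hlen hη0 q (γ T) (by linarith : (0:ℝ) ≤ t) hTt
  have hyzt : dist y zt ≤ ε / 4 := hcly T η zt hT0 hη0 hηy' hTey hzt1 hzt2
  by_cases hcase : s ≤ dist q zt
  · -- construct an s-approximate point between q and zt
    set η₂ : ℝ := min (ηx / 4) (ε / 4) with hη₂def
    have hη₂0 : 0 < η₂ := lt_min (by linarith) (by linarith)
    have hη₂x : η₂ ≤ ηx / 4 := min_le_left _ _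
    have hη₂ε : η₂ ≤ ε / 4 := min_le_right _ _
    obtain ⟨w, hw1, hw2⟩ := approx_between hlen hη₂0 q zt hs.le hcase
    have hwT : dist w (γ T) ≤ dist q (γ T) - s + (2 * η + η₂) := by
      have h1 : dist w (γ T) ≤ dist w zt + dist zt (γ T) := dist_triangle _ _ _
      linarith
    have hwq : dist q w ≤ s + (2 * η + η₂) := by linarith
    have hxw : dist x w ≤ ε / 4 := by
      apply hclx T (2 * η + η₂) w hT0 (by linarith) ?_ hTex hwq hwT
      linarith
    calc dist x y ≤ dist x w + dist w y := dist_triangle _ _ _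
      _ ≤ dist x w + (dist w zt + dist zt y) := by
          have := dist_triangle w zt y; linarith
      _ ≤ ε / 4 + ((dist q zt - s + η₂) + ε / 4) := by
          rw [dist_comm zt y] at *
          linarith
      _ ≤ ε / 4 + ((t + η - s + η₂) + ε / 4) := by linarith
      _ ≤ t - s + ε := by linarith
  · -- zt itself is an s-approximate point
    push_neg at hcase
    have hwq : dist q zt ≤ s + 2 * η := by linarith
    have hwT : dist zt (γ T) ≤ dist q (γ T) - s + 2 * η := by linarith
    have hxzt : dist x zt ≤ ε / 4 := by
      apply hclx T (2 * η) zt hT0 (by linarith) (by linarith) hTex hwq hwT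
    calc dist x y ≤ dist x zt + dist zt y := dist_triangle _ _ _
      _ ≤ ε / 4 + ε / 4 := by rw [dist_comm zt y]; linarith
      _ ≤ t - s + ε := by linarith

end Ray

section Assemble
variable {γ : ℝ → L} (hγ : IsLine γ)
include hγ

/-- through every point there is a line parallel to `γ`. -/
lemma line_through [CompleteSpace L] (hlen : LengthMid L) (hcbb : CBB0Cmp L) (q : L) :
    ∃ ℓ : ℝ → L, ℓ 0 = q ∧ (∀ s t : ℝ, dist (ℓ s) (ℓ t) = |s - t|) ∧
      (∀ t : ℝ, bus γ (ℓ t) = bus γ q - t) := by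
  have hγ' : IsLine (fun u => γ (-u)) := hγ.rev
  have hF : ∀ t : ℝ, 0 < t → ∃ x, IsRayPoint γ q x t :=
    fun t ht => ray_exists hγ hlen hcbb q ht
  have hG : ∀ t : ℝ, 0 < t → ∃ x, IsRayPoint (fun u => γ (-u)) q x t :=
    fun t ht => ray_exists hγ' hlen hcbb q ht
  choose F hFp using hF
  choose G hGp using hG
  set ℓ : ℝ → L := fun t =>
    if h : 0 < t then F t h else if h' : 0 < -t then G (-t) h' else q with hℓdef
  have hℓ0 : ℓ 0 = q := by simp [hℓdef]
  -- Busemann values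
  have hb : ∀ t : ℝ, bus γ (ℓ t) = bus γ q - t := by
    intro t
    by_cases h : 0 < t
    · simp only [hℓdef, dif_pos h]
      exact (hFp t h).2.1
    · by_cases h' : 0 < -t
      · simp only [hℓdef, dif_neg h, dif_pos h']
        have h1 := (hGp (-t) h').2.1
        have h2 := bus_add_busrev hγ hcbb (G (-t) h')
        have h3 := bus_add_busrev hγ hcbb q
        linarith
      · have ht0 : t = 0 := by linarith [not_lt.mp h, not_lt.mp h']
        subst ht0
        simp [hℓ0]
  -- distance from q
  have hdq : ∀ t : ℝ, dist q (ℓ t) = |t| := by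
    intro t
    by_cases h : 0 < t
    · simp only [hℓdef, dif_pos h]
      rw [(hFp t h).1, abs_of_pos h]
    · by_cases h' : 0 < -t
      · simp only [hℓdef, dif_neg h, dif_pos h']
        rw [(hGp (-t) h').1, abs_of_neg (by linarith)]
      · have ht0 : t = 0 := by linarith [not_lt.mp h, not_lt.mp h']
        subst ht0
        simp [hℓ0]
  -- upper bound
  have hupper : ∀ s t : ℝ, s ≤ t → dist (ℓ s) (ℓ t) ≤ t - s := by
    intro s t hst
    rcases lt_trichotomy s 0 with hs | hs | hs
    · rcases le_or_gt t 0 with ht | ht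
      · -- both ≤ 0 : use reverse ray
        rcases eq_or_lt_of_le ht with ht0 | ht0
        · subst ht0
          rw [hℓ0, dist_comm, hdq s, abs_of_neg hs]
          linarith
        · have h1 : (0:ℝ) < -t := by linarith
          have h2 : -t ≤ -s := by linarith
          have := ray_dist hγ' hlen hcbb q h1 h2 (hGp (-t) h1) (hGp (-s) (by linarith))
          simp only [hℓdef, dif_neg (by linarith : ¬ 0 < s), dif_pos (by linarith : (0:ℝ) < -s),
            dif_neg (by linarith : ¬ 0 < t), dif_pos h1]
          rw [dist_comm]
          linarith
      · -- s < 0 < t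
        have h1 : dist (ℓ s) (ℓ t) ≤ dist (ℓ s) q + dist q (ℓ t) := dist_triangle _ _ _
        rw [dist_comm (ℓ s) q] at h1
        rw [hdq s, hdq t, abs_of_neg hs, abs_of_pos ht] at h1
        linarith
    · subst hs
      have h1 : dist (ℓ 0) (ℓ t) = dist q (ℓ t) := by rw [hℓ0]
      rw [h1, hdq t, abs_of_nonneg hst]
      linarith
    · have ht : 0 < t := lt_of_lt_of_le hs hst
      have := ray_dist hγ hlen hcbb q hs hst (hFp s hs) (hFp t ht)
      simp only [hℓdef, dif_pos hs, dif_pos ht]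
      linarith
  refine ⟨ℓ, hℓ0, fun s t => ?_, hb⟩
  rcases le_total s t with hst | hst
  · rw [abs_sub_comm, abs_of_nonneg (by linarith)]
    refine le_antisymm (hupper s t hst) ?_
    have h1 := abs_bus_sub_le hγ (ℓ s) (ℓ t)
    rw [hb s, hb t] at h1
    have h2 : |bus γ q - s - (bus γ q - t)| = t - s := by
      rw [show bus γ q - s - (bus γ q - t) = t - s by ring, abs_of_nonneg (by linarith)]
    rw [h2] at h1
    linarith
  · rw [abs_of_nonneg (by linarith)]
    refine le_antisymm ?_ ?_
    · rw [dist_comm]; exact hupper t s hst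
    · have h1 := abs_bus_sub_le hγ (ℓ s) (ℓ t)
      rw [hb s, hb t] at h1
      have h2 : |bus γ q - s - (bus γ q - t)| = s - t := by
        rw [show bus γ q - s - (bus γ q - t) = -(s - t) by ring, abs_neg,
          abs_of_nonneg (by linarith)]
      rw [h2] at h1
      linarith

/-- The master distance formula. -/
lemma master (hcbb : CBB0Cmp L) (p q : L) {ℓ : ℝ → L} (hl0 : ℓ 0 = q)
    (hl1 : ∀ s t : ℝ, dist (ℓ s) (ℓ t) = |s - t|)
    (hl2 : ∀ t : ℝ, bus γ (ℓ t) = bus γ q - t) (t : ℝ) :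
    dist p (ℓ t) ^ 2 =
      dist p q ^ 2 - (bus γ p - bus γ q) ^ 2 + (t + bus γ p - bus γ q) ^ 2 := by
  by_cases hp : ∃ t₀ : ℝ, p = ℓ t₀
  · obtain ⟨t₀, rfl⟩ := hp
    have h1 : dist (ℓ t₀) (ℓ t) = |t₀ - t| := hl1 t₀ t
    have h2 : dist (ℓ t₀) q = |t₀| := by
      rw [← hl0, hl1]; norm_num
    have h3 : bus γ (ℓ t₀) = bus γ q - t₀ := hl2 t₀
    rw [h1, h2, h3]
    rw [sq_abs, sq_abs]
    ring
  · push_neg at hp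
    set Δ : ℝ := bus γ p - bus γ q with hΔ
    have hγ' : IsLine (fun u => γ (-u)) := hγ.rev
    have hbusrev : ∀ x : L, bus (fun u => γ (-u)) x = -bus γ x := by
      intro x
      have := bus_add_busrev hγ hcbb x
      linarith
    -- W is non-increasing
    have h1 : ∀ u v : ℝ, u < v →
        dist p (ℓ v) ^ 2 ≤ dist p (ℓ u) ^ 2 + (v - u) ^ 2 + 2 * (v - u) * (u + Δ) := by
      intro u v huv
      have hd : dist (ℓ u) (ℓ v) = v - u := by
        rw [hl1, abs_sub_comm, abs_of_nonneg (by linarith)]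
      have hm : 0 < dist (ℓ u) (ℓ v) := by rw [hd]; linarith
      have hfront : bus (fun w => γ (-w)) (ℓ v) - bus (fun w => γ (-w)) (ℓ u) =
          dist (ℓ u) (ℓ v) := by
        rw [hbusrev, hbusrev, hl2, hl2, hd]; ring
      have hk := key hγ' hcbb (ℓ u) (ℓ v) p hm hfront
      rw [hd, hbusrev, hbusrev, hl2] at hk
      have : -(bus γ q - u) - -bus γ p = u + Δ := by rw [hΔ]; ring
      rw [this] at hk
      linarith
    have h2 : ∀ u v : ℝ, v < u →
        dist p (ℓ v) ^ 2 ≤ dist p (ℓ u) ^ 2 + (u - v) ^ 2 - 2 * (u - v) * (u + Δ) := by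
      intro u v hvu
      have hd : dist (ℓ u) (ℓ v) = u - v := by
        rw [hl1, abs_of_nonneg (by linarith)]
      have hm : 0 < dist (ℓ u) (ℓ v) := by rw [hd]; linarith
      have hfront : bus γ (ℓ v) - bus γ (ℓ u) = dist (ℓ u) (ℓ v) := by
        rw [hl2, hl2, hd]; ring
      have hk := key hγ hcbb (ℓ u) (ℓ v) p hm hfront
      rw [hd, hl2] at hk
      have : bus γ q - u - bus γ p = -(u + Δ) := by rw [hΔ]; ring
      rw [this] at hk
      linarith
    -- conclude W t = W 0
    have hW : dist p (ℓ t) ^ 2 - (t + Δ) ^ 2 = dist p (ℓ 0) ^ 2 - (0 + Δ) ^ 2 := by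
      rcases lt_trichotomy t 0 with ht | ht | ht
      · have ha := h1 t 0 ht
        have hb' := h2 0 t ht
        nlinarith [ha, hb']
      · rw [ht]
      · have ha := h1 0 t ht
        have hb' := h2 t 0 ht
        nlinarith [ha, hb']
    rw [hl0] at hW
    rw [hΔ] at hW ⊢
    nlinarith [hW]

end Assemble

end LS

theorem line_splitting {L : Type*} [MetricSpace L] [CompleteSpace L]
    (hlen : LengthMid L) (hcbb : CBB0Cmp L)
    (γ : ℝ → L) (hline : ∀ s t : ℝ, dist (γ s) (γ t) = |s - t|) :
    ∃ S : Set L, Nonempty (L ≃ᵢ WithLp 2 (S × ℝ)) := by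
  classical
  have hγ : LS.IsLine γ := hline
  -- lines through every point
  choose ℓ hl0 hl1 hl2 using fun q : L => LS.line_through hγ hlen hcbb q
  set b : L → ℝ := LS.bus γ with hbdef
  have hM : ∀ p q : L, ∀ t : ℝ, dist p (ℓ q t) ^ 2 =
      dist p q ^ 2 - (b p - b q) ^ 2 + (t + b p - b q) ^ 2 :=
    fun p q t => LS.master hγ hcbb p q (hl0 q) (hl1 q) (hl2 q) t
  have hbflow : ∀ q : L, ∀ t : ℝ, b (ℓ q t) = b q - t := fun q t => hl2 q t
  have hflow_dist : ∀ q : L, ∀ t : ℝ, dist q (ℓ q t) = |t| := by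
    intro q t
    have h := hl1 q 0 t
    rw [hl0 q] at h
    simpa using h
  -- the slice
  refine ⟨{x : L | b x = 0}, ?_⟩
  set S : Set L := {x : L | b x = 0} with hSdef
  set π : L → L := fun p => ℓ p (b p) with hπdef
  have hπS : ∀ p : L, b (π p) = 0 := by
    intro p
    rw [hπdef]
    simp only
    rw [hbflow p (b p)]
    ring
  -- distance formula for projections
  have hdist_π : ∀ p q : L, dist (π p) (π q) ^ 2 = dist p q ^ 2 - (b p - b q) ^ 2 := by
    intro p q
    have h1 : dist (π p) (π q) ^ 2 = dist (π p) q ^ 2 - b q ^ 2 := by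
      have := hM (π p) q (b q)
      rw [hπS p] at this
      calc dist (π p) (π q) ^ 2 = dist (π p) (ℓ q (b q)) ^ 2 := rfl
        _ = dist (π p) q ^ 2 - (0 - b q) ^ 2 + (b q + 0 - b q) ^ 2 := this
        _ = dist (π p) q ^ 2 - b q ^ 2 := by ring
    have h2 : dist (π p) q ^ 2 = dist p q ^ 2 - (b q - b p) ^ 2 + b q ^ 2 := by
      have h3 := hM q p (b p)
      calc dist (π p) q ^ 2 = dist q (ℓ p (b p)) ^ 2 := by rw [dist_comm]
        _ = dist q p ^ 2 - (b q - b p) ^ 2 + (b p + b q - b p) ^ 2 := h3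
        _ = dist p q ^ 2 - (b q - b p) ^ 2 + b q ^ 2 := by rw [dist_comm q p]; ring
    rw [h1, h2]
    ring
  -- rigidity : flowing back returns
  have hrig : ∀ (σ : L), b σ = 0 → ∀ u : ℝ, π (ℓ σ u) = σ := by
    intro σ hσ u
    have hbq : b (ℓ σ u) = -u := by rw [hbflow, hσ]; ring
    have h1 : dist σ (π (ℓ σ u)) ^ 2 = 0 := by
      have h2 := hM σ (ℓ σ u) (b (ℓ σ u))
      have h3 : dist σ (ℓ σ u) = |u| := hflow_dist σ u
      calc dist σ (π (ℓ σ u)) ^ 2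
          = dist σ (ℓ (ℓ σ u) (b (ℓ σ u))) ^ 2 := rfl
        _ = dist σ (ℓ σ u) ^ 2 - (b σ - b (ℓ σ u)) ^ 2
            + (b (ℓ σ u) + b σ - b (ℓ σ u)) ^ 2 := h2
        _ = |u| ^ 2 - u ^ 2 + 0 ^ 2 := by rw [h3, hσ, hbq]; ring
        _ = 0 := by rw [sq_abs]; ring
    have h4 : dist σ (π (ℓ σ u)) = 0 := by
      have := sq_eq_zero_iff.mp h1
      exact this
    rw [dist_comm] at h4
    exact (dist_eq_zero.mp h4)
  have hleft : ∀ p : L, ℓ (π p) (- b p) = p := by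
    intro p
    have h1 : dist p (ℓ (π p) (- b p)) ^ 2 = 0 := by
      have h2 := hM p (π p) (- b p)
      rw [hπS p] at h2
      have h3 : dist p (π p) = |b p| := hflow_dist p (b p)
      calc dist p (ℓ (π p) (- b p)) ^ 2
          = dist p (π p) ^ 2 - (b p - 0) ^ 2 + (-b p + b p - 0) ^ 2 := h2
        _ = |b p| ^ 2 - b p ^ 2 + 0 := by rw [h3]; ring
        _ = 0 := by rw [sq_abs]; ring
    have h4 := sq_eq_zero_iff.mp h1
    exact (dist_eq_zero.mp h4).symm
  -- build the equivalence
  let e₀ : L ≃ (S × ℝ) :=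
    { toFun := fun p => (⟨π p, hπS p⟩, b p)
      invFun := fun x => ℓ x.1.1 (-x.2)
      left_inv := fun p => hleft p
      right_inv := by
        rintro ⟨⟨σ, hσ⟩, u⟩
        have hσ' : b σ = 0 := hσ
        have hb1 : b (ℓ σ (-u)) = u := by rw [hbflow, hσ']; ring
        have hπ1 : π (ℓ σ (-u)) = σ := hrig σ hσ (-u)
        simp only
        refine Prod.ext ?_ ?_
        · exact Subtype.ext hπ1
        · exact hb1 }
  have hiso : ∀ p q : L,
      dist ((WithLp.equiv 2 (S × ℝ)).symm (⟨π p, hπS p⟩, b p))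
          ((WithLp.equiv 2 (S × ℝ)).symm (⟨π q, hπS q⟩, b q))
        = dist p q := by
    intro p q
    have h2R : (0:ℝ) < (2 : ENNReal).toReal := by norm_num
    rw [WithLp.prod_dist_eq_add h2R]
    have hfst : ∀ x : S × ℝ, ((WithLp.equiv 2 (S × ℝ)).symm x).fst = x.fst :=
      fun x => rfl
    have hsnd : ∀ x : S × ℝ, ((WithLp.equiv 2 (S × ℝ)).symm x).snd = x.snd :=
      fun x => rfl
    rw [hfst, hfst, hsnd, hsnd]
    have htoReal : (2 : ENNReal).toReal = 2 := by norm_num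
    rw [htoReal]
    rw [Real.rpow_two, Real.rpow_two]
    rw [← Real.sqrt_eq_rpow]
    have hd1 : dist (⟨π p, hπS p⟩ : S) (⟨π q, hπS q⟩ : S) = dist (π p) (π q) :=
      Subtype.dist_eq _ _
    have hd2 : dist (b p) (b q) = |b p - b q| := Real.dist_eq _ _
    rw [show ((⟨π p, hπS p⟩, b p) : S × ℝ).1 = ⟨π p, hπS p⟩ from rfl]
    rw [show ((⟨π q, hπS q⟩, b q) : S × ℝ).1 = ⟨π q, hπS q⟩ from rfl]
    rw [hd1, hd2, sq_abs, hdist_π p q]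
    rw [show dist p q ^ 2 - (b p - b q) ^ 2 + (b p - b q) ^ 2 = dist p q ^ 2 by ring]
    exact Real.sqrt_sq dist_nonneg
  exact ⟨{ toEquiv := e₀.trans (WithLp.equiv 2 (S × ℝ)).symm,
           isometry_toFun := Isometry.of_dist_eq fun p q => hiso p q }⟩
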